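/- Let m be a nonempty multisegment whose largest end is c, and fix an integer b ≤ c. Suppose there is no downward sequence of minimal linked segments in neighbors on m ranging from c to b−1. Let Δ̃_{b−1}, …, Δ̃_{c−1} be the (possibly void) segments participating in the extension process for I^Zel_{[b,c]}(m) (so these are chosen directly from m, and I^Zel_{[b,c]}(m) = m − Σ_{i=b−1}^{c−1} Δ̃_i + Σ_{i=b−1}^{c−1} Δ̃_i⁺). Then the ordered segments participating in the MW algorithm for I^Zel_{[b,c]}(m) are exactly Δ̃_{c−1}⁺, Δ̃_{c−2}⁺, …, Δ̃_{b−1}⁺. -/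

import Mathlib

namespace Multiseg

/-- A segment `[a,b]` on a fixed cuspidal line, encoded by its endpoints. -/
abbrev Seg := ℤ × ℤ

/-- A multiset of pairs is a multisegment when each pair is a genuine segment. -/
def IsMS (m : Multiset Seg) : Prop := ∀ Δ ∈ m, Δ.1 ≤ Δ.2

/-- `Δ ≺ Δ'` : the segment `Δ` precedes `Δ'`. -/
def Prec (Δ Δ' : Seg) : Prop := Δ.1 < Δ'.1 ∧ Δ.2 < Δ'.2 ∧ Δ'.1 ≤ Δ.2 + 1

instance : DecidableRel Prec := fun _ _ => by unfold Prec; infer_instance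

/-- `Δ ⊆ Δ'` as segments. -/
def SSub (Δ Δ' : Seg) : Prop := Δ'.1 ≤ Δ.1 ∧ Δ.2 ≤ Δ'.2

/-- `m[i]`, the segments of `m` starting at `i`. -/
def startAt (m : Multiset Seg) (i : ℤ) : Multiset Seg := m.filter fun Δ => Δ.1 = i

/-- `m⟨i⟩`, the segments of `m` ending at `i`. -/
def endAt (m : Multiset Seg) (i : ℤ) : Multiset Seg := m.filter fun Δ => Δ.2 = i

/-- `m_{[a,b]} = {[a',b'] ∈ m : a ≤ a' ≤ b+1 ≤ b'+1}`. -/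
def mRange (m : Multiset Seg) (a b : ℤ) : Multiset Seg :=
  m.filter fun Δ => a ≤ Δ.1 ∧ Δ.1 ≤ b + 1 ∧ b ≤ Δ.2

/-- Add the segment `[x,y]` to `m`, discarding it if it is void. -/
def pushSeg (m : Multiset Seg) (x y : ℤ) : Multiset Seg :=
  if x ≤ y then m + {(x, y)} else m

def msetMax (s : Multiset ℤ) : Option ℤ :=
  if h : s = 0 then none else some (s.toFinset.max' (Multiset.toFinset_nonempty.mpr h))

def msetMin (s : Multiset ℤ) : Option ℤ :=
  if h : s = 0 then none else some (s.toFinset.min' (Multiset.toFinset_nonempty.mpr h))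

/-- The longest segment of `m[i]`, if any. -/
def longStart (m : Multiset Seg) (i : ℤ) : Option Seg :=
  (msetMax ((startAt m i).map Prod.snd)).map fun y => (i, y)

/-- The shortest segment of `m[i]`, if any. -/
def shortStart (m : Multiset Seg) (i : ℤ) : Option Seg :=
  (msetMin ((startAt m i).map Prod.snd)).map fun y => (i, y)

/-- The longest segment of `m⟨i⟩`, if any. -/
def longEnd (m : Multiset Seg) (i : ℤ) : Option Seg :=
  (msetMin ((endAt m i).map Prod.fst)).map fun x => (x, i)

/-- The shortest segment of `m⟨i⟩`, if any. -/
def shortEnd (m : Multiset Seg) (i : ℤ) : Option Seg :=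
  (msetMax ((endAt m i).map Prod.fst)).map fun x => (x, i)

/-- One removal step of the `tds(·,c)` process: remove the longest segment `Δ''`
of `m[c+1]` and the longest segment `Δ'` of `m[c]` with `Δ' ≺ Δ''`. -/
def tdsStep (m : Multiset Seg) (c : ℤ) : Option (Multiset Seg) :=
  match longStart m (c + 1) with
  | none => none
  | some Δ'' =>
    match msetMax (((startAt m c).filter fun Δ => Prec Δ Δ'').map Prod.snd) with
    | none => none
    | some y => some ((m.erase (c, y)).erase Δ'')

def tdsIterF (c : ℤ) : ℕ → Multiset Seg → Multiset Seg
  | 0, m => m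
  | n + 1, m =>
    match tdsStep m c with
    | none => m
    | some m' => tdsIterF c n m'

/-- Iterate the `tds(·,c)` process until it terminates. -/
def tdsIter (c : ℤ) (m : Multiset Seg) : Multiset Seg := tdsIterF c m.card m

/-- The `ρ`-derivative algorithm `𝒟_{[a]}`; the value `none` codes `∞`. -/
def Drho (a : ℤ) (m : Multiset Seg) : Option (Multiset Seg) :=
  (shortStart (tdsIter a m) a).map fun Δ => pushSeg (m.erase Δ) (a + 1) Δ.2

/-- `ε_{[a]}(m)`, the number of segments starting at `a` left after the
`tds(·,a)` process terminates. -/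
def epsA (a : ℤ) (m : Multiset Seg) : ℕ := (startAt (tdsIter a m) a).card

/-- The next element of an upward sequence after `p`. -/
def usNext (n : Multiset Seg) (p : Seg) : Option Seg :=
  match msetMin ((n.filter fun Δ => Prec p Δ).map Prod.fst) with
  | none => none
  | some aj =>
    (msetMax ((((n.filter fun Δ => Prec p Δ).filter fun Δ => Δ.1 = aj)).map Prod.snd)).map
      fun y => (aj, y)

def usAux (n : Multiset Seg) : ℕ → Seg → List Seg
  | 0, _ => []
  | fuel + 1, p =>
    match usNext n p with
    | none => []
    | some Δ => Δ :: usAux n fuel Δ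

/-- The upward sequence `Us(n)` of maximally linked segments of `n`. -/
def usList (n : Multiset Seg) : List Seg :=
  match msetMin (n.map Prod.fst) with
  | none => []
  | some a1 =>
    match longStart n a1 with
    | none => []
    | some Δ1 => Δ1 :: usAux n n.card Δ1

/-- The decomposition of a multisegment into successive upward sequences. -/
def usDecomp : ℕ → Multiset Seg → List (List Seg)
  | 0, _ => []
  | fuel + 1, n =>
    if n = 0 then [] else usList n :: usDecomp fuel (n - (usList n : Multiset Seg))

/-- `[x,y] ⊆ [u,v]` (with the void interval contained in anything). -/
def intSubB (x y u v : ℤ) : Bool := decide (y < x) || (decide (u ≤ x) && decide (y ≤ v))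

/-- Find, in a row of an upward-sequence decomposition, the first segment `Δ`
whose removable free section contains `[s(Δ), top]`. -/
def findRowD : List Seg → ℤ → Option Seg
  | [], _ => none
  | [Δ], top => if intSubB Δ.1 top Δ.1 Δ.2 then some Δ else none
  | Δ :: Δ' :: rest, top =>
    if intSubB Δ.1 top Δ.1 (Δ'.1 - 2) then some Δ else findRowD (Δ' :: rest) top

/-- The selection step of the Langlands derivative algorithm, scanning the rows
downwards from the last one; it records each selected segment together with the
start of its truncation. -/
def selAuxD (rows : List (List Seg)) : ℕ → ℤ → List (Seg × ℤ)
  | 0, _ => []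
  | n + 1, top =>
    match findRowD (rows.getD n []) top with
    | some Δ => (Δ, top + 1) :: selAuxD rows n (Δ.1 - 1)
    | none => selAuxD rows n top

/-- The Langlands derivative algorithm `𝒟^Lang_{[a,b]}`; `none` codes `∞`. -/
def DLang (a b : ℤ) (m : Multiset Seg) : Option (Multiset Seg) :=
  let m1 := mRange m a b
  let rows := usDecomp m1.card m1
  let sel := selAuxD rows rows.length b
  match sel.getLast? with
  | none => none
  | some (Δl, _) =>
    if Δl.1 = a then
      some (sel.foldl (fun acc p => pushSeg (acc.erase p.1) p.2 p.1.2) m)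
    else none

/-- One removal step of the `tus(·,c)` process. -/
def tusStep (n : Multiset Seg) (c : ℤ) : Option (Multiset Seg) :=
  match shortStart n c with
  | none => none
  | some Δ' =>
    match msetMin (((startAt n (c + 1)).filter fun Δ => Prec Δ' Δ).map Prod.snd) with
    | none => none
    | some y => some ((n.erase Δ').erase (c + 1, y))

def tusIterF (c : ℤ) : ℕ → Multiset Seg → Multiset Seg
  | 0, n => n
  | k + 1, n =>
    match tusStep n c with
    | none => n
    | some n' => tusIterF c k n'

/-- Iterate the `tus(·,c)` process until it terminates. -/
def tusIter (c : ℤ) (n : Multiset Seg) : Multiset Seg := tusIterF c n.card n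

/-- The `ρ`-integral algorithm `ℐ_{[a]}` (always defined). -/
def Irho (a : ℤ) (n : Multiset Seg) : Multiset Seg :=
  match longStart (tusIter a n) (a + 1) with
  | none => n + {(a, a)}
  | some Δ => pushSeg (n.erase Δ) a Δ.2

/-- The next element of a downward sequence after `p`. -/
def dsNext (n : Multiset Seg) (p : Seg) : Option Seg :=
  match msetMax ((n.filter fun Δ => Prec Δ p).map Prod.fst) with
  | none => none
  | some aq => shortStart n aq

def dsAux (n : Multiset Seg) : ℕ → Seg → List Seg
  | 0, _ => []
  | k + 1, p =>
    match dsNext n p with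
    | none => []
    | some Δ => Δ :: dsAux n k Δ

/-- The downward sequence `Ds(n)` of minimal linked segments with the largest
starting. -/
def dsList (n : Multiset Seg) : List Seg :=
  match msetMax (n.map Prod.fst) with
  | none => []
  | some a1 =>
    match shortStart n a1 with
    | none => []
    | some Δ1 => Δ1 :: dsAux n n.card Δ1

/-- The decomposition of a multisegment into successive downward sequences. -/
def dsDecomp : ℕ → Multiset Seg → List (List Seg)
  | 0, _ => []
  | k + 1, n =>
    if n = 0 then [] else dsList n :: dsDecomp k (n - (dsList n : Multiset Seg))

/-- Find, in a row of a downward-sequence decomposition, the segment whose set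
of addable free points contains `pt`. -/
def findRowI (a : ℤ) : List Seg → ℤ → Option Seg
  | [], _ => none
  | [Δ], pt => if decide (a ≤ pt) && decide (pt ≤ Δ.1 - 1) then some Δ else none
  | Δ :: Δ' :: rest, pt =>
    if decide (Δ'.1 + 1 ≤ pt) && decide (pt ≤ Δ.1 - 1) then some Δ
    else findRowI a (Δ' :: rest) pt

/-- The selection step of the Langlands integral algorithm; it records each
selected segment together with the start of its extension. -/
def selAuxI (a : ℤ) (rows : List (List Seg)) : ℕ → ℤ → List (Seg × ℤ)
  | 0, _ => []
  | n + 1, pt =>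
    match findRowI a (rows.getD n []) pt with
    | some Δ => (Δ, pt) :: selAuxI a rows n Δ.1
    | none => selAuxI a rows n pt

/-- The Langlands integral algorithm `ℐ^Lang_{[a,b]}`. -/
def ILang (a b : ℤ) (m : Multiset Seg) : Multiset Seg :=
  let m1 := mRange m a b
  let rows := dsDecomp m1.card m1
  let sel := selAuxI a rows rows.length a
  let base := sel.foldl (fun acc p => pushSeg (acc.erase p.1) p.2 p.1.2) m
  match sel.getLast? with
  | none => pushSeg base a b
  | some (Δl, _) => pushSeg base Δl.1 b

/-- `m` is in good range for `[a,b]`. -/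
def GoodRange (m : Multiset Seg) (a b : ℤ) : Prop := mRange m a b = m

/-- `Θ`, the Gelfand–Kazhdan involution on multisegments. -/
def Theta (m : Multiset Seg) : Multiset Seg := m.map fun Δ => (-Δ.2, -Δ.1)

/-- The exotic duality `𝔻_r`. -/
def Dual (r : ℤ) (m : Multiset Seg) : Multiset Seg :=
  m.map fun Δ => (-r + Δ.2 + 1, Δ.1 - 1)

/-- `𝔻_r^{[a,b]}`. -/
def DualAB (r a b : ℤ) (m : Multiset Seg) : Multiset Seg := Dual r m + {(b - r + 1, b)}

/-- The left Langlands derivative algorithm `𝒟^{Lang,L}_{[a,b]}`. -/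
def DLangL (a b : ℤ) (m : Multiset Seg) : Option (Multiset Seg) :=
  (DLang (-b) (-a) (Theta m)).map Theta

/-- The left `ρ`-derivative algorithm `𝒟^{Lang,L}_{[a]}`. -/
def DrhoL (a : ℤ) (m : Multiset Seg) : Option (Multiset Seg) :=
  (Drho (-a) (Theta m)).map Theta

/-- The next segment chosen by the MW algorithm after `p`. -/
def mwNext (m : Multiset Seg) (p : Seg) : Option Seg :=
  (msetMax (((endAt m (p.2 - 1)).filter fun Δ => Prec Δ p).map Prod.fst)).map
    fun x => (x, p.2 - 1)

def mwAux (m : Multiset Seg) : ℕ → Seg → List Seg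
  | 0, _ => []
  | k + 1, p =>
    match mwNext m p with
    | none => []
    | some Δ => Δ :: mwAux m k Δ

/-- The ordered segments participating in the MW algorithm for `m`. -/
def mwList (m : Multiset Seg) : List Seg :=
  match msetMax (m.map Prod.snd) with
  | none => []
  | some b0 =>
    match shortEnd m b0 with
    | none => []
    | some Δ0 => Δ0 :: mwAux m m.card Δ0

/-- `𝒟^MW(m)`. -/
def DMW (m : Multiset Seg) : Multiset Seg :=
  (mwList m).foldl (fun acc Δ => pushSeg (acc.erase Δ) Δ.1 (Δ.2 - 1)) m

/-- The first segment `Δ(m)` produced by the MW algorithm for `m`. -/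
def mwFirstSeg (m : Multiset Seg) : Option Seg :=
  match (mwList m).head?, (mwList m).getLast? with
  | some Δ0, some Δk => some (Δk.1, Δ0.2)
  | _, _ => none

/-- The total relative length of a multisegment. -/
def totalLen (m : Multiset Seg) : ℕ := (m.map fun Δ => (Δ.2 - Δ.1 + 1).toNat).sum

def sharpAux : ℕ → Multiset Seg → Multiset Seg
  | 0, _ => 0
  | k + 1, m =>
    if m = 0 then 0
    else
      match mwFirstSeg m with
      | none => 0
      | some Δ => Δ ::ₘ sharpAux k (DMW m)

/-- The Mœglin–Waldspurger involution `m^#`. -/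
def msharp (m : Multiset Seg) : Multiset Seg := sharpAux (totalLen m) m

/-- `ε^MW_{[a,c]}(m)`, the multiplicity of `[a,c]` in `m^#`. -/
def epsMW (a c : ℤ) (m : Multiset Seg) : ℕ := (msharp m).count (a, c)

/-- `m_i`: remove from `m` the participants of the first `i` runs of the MW
algorithm. -/
def mwStage (m : Multiset Seg) : ℕ → Multiset Seg
  | 0 => m
  | i + 1 => mwStage m i - (mwList (DMW^[i] m) : Multiset Seg)

/-- `MW_k(m)`: all segments ending at `k` participating in the first `r` runs
of the MW algorithm. -/
def MWkSet (m : Multiset Seg) (r : ℕ) (k : ℤ) : Multiset Seg :=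
  ∑ i ∈ Finset.range r, (mwList (DMW^[i] m) : Multiset Seg).filter fun Δ => Δ.2 = k

def upNbrAux (m : Multiset Seg) : ℕ → Seg → Option (List Seg)
  | 0, p => some [p]
  | k + 1, p =>
    match msetMin (((endAt m (p.2 + 1)).filter fun Δ => Prec p Δ).map Prod.fst) with
    | none => none
    | some x => (upNbrAux m k (x, p.2 + 1)).map fun l => p :: l

/-- The removal upward sequence of maximal linked segments in neighbors on `m`
ranging from `a-1` to `b` (if it exists). -/
def upSeqNbr (m : Multiset Seg) (a b : ℤ) : Option (List Seg) :=
  match longEnd m (a - 1) with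
  | none => none
  | some Δ => upNbrAux m (b - (a - 1)).toNat Δ

def zelRemF (a b : ℤ) : ℕ → Multiset Seg → Multiset Seg
  | 0, m => m
  | k + 1, m =>
    match upSeqNbr m a b with
    | none => m
    | some l => zelRemF a b k (m - (l : Multiset Seg))

/-- Repeatedly remove removal upward sequences of maximal linked segments in
neighbors ranging from `a-1` to `b`, until none exists. -/
def zelRem (a b : ℤ) (m : Multiset Seg) : Multiset Seg := zelRemF a b m.card m

def zelRemCountF (a b : ℤ) : ℕ → Multiset Seg → ℕ
  | 0, _ => 0
  | k + 1, m =>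
    match upSeqNbr m a b with
    | none => 0
    | some l => zelRemCountF a b k (m - (l : Multiset Seg)) + 1

/-- The number of removal upward sequences of maximal linked segments in
neighbors ranging from `a-1` to `b` successively removed from `m`. -/
def zelRemCount (a b : ℤ) (m : Multiset Seg) : ℕ := zelRemCountF a b m.card m

def downNbrAux (m : Multiset Seg) : ℕ → Seg → Option (List Seg)
  | 0, p => some [p]
  | k + 1, p =>
    match msetMax (((endAt m (p.2 - 1)).filter fun Δ => Prec Δ p).map Prod.fst) with
    | none => none
    | some x => (downNbrAux m k (x, p.2 - 1)).map fun l => p :: l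

/-- The Zelevinsky derivative algorithm `𝒟^Zel_{[a,b]}`; `none` codes `∞`. -/
def DZel (a b : ℤ) (m : Multiset Seg) : Option (Multiset Seg) :=
  match shortEnd (zelRem a b m) b with
  | none => none
  | some Δb =>
    match downNbrAux (zelRem a b m) (b - a).toNat Δb with
    | none => none
    | some l => some (l.foldl (fun acc Δ => pushSeg (acc.erase Δ) Δ.1 (Δ.2 - 1)) m)

/-- The downward sequence of minimal linked segments in neighbors on `m`
ranging from `b` to `a-1` (if it exists). -/
def downSeqNbr (m : Multiset Seg) (a b : ℤ) : Option (List Seg) :=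
  match shortEnd m b with
  | none => none
  | some Δ => downNbrAux m (b - (a - 1)).toNat Δ

def izRemF (a b : ℤ) : ℕ → Multiset Seg → Multiset Seg
  | 0, m => m
  | k + 1, m =>
    match downSeqNbr m a b with
    | none => m
    | some l => izRemF a b k (m - (l : Multiset Seg))

/-- Repeatedly remove downward sequences of minimal linked segments in
neighbors ranging from `b` to `a-1`, until none exists. -/
def izRem (a b : ℤ) (m : Multiset Seg) : Multiset Seg := izRemF a b m.card m

def extNext (m : Multiset Seg) (p : Seg) : Option Seg :=
  (msetMin (((endAt m (p.2 + 1)).filter fun Δ => Prec p Δ).map Prod.fst)).map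
    fun x => (x, p.2 + 1)

def extAux (m : Multiset Seg) : ℕ → Option Seg → List (Option Seg)
  | 0, _ => []
  | k + 1, p =>
    let cur := p.bind (extNext m)
    cur :: extAux m k cur

/-- The (possibly void) segments `Δ̃_{a-1}, …, Δ̃_{b-1}` participating in the
extension process of the Zelevinsky integral algorithm on `m`. -/
def extList (m : Multiset Seg) (a b : ℤ) : List (Option Seg) :=
  longEnd m (a - 1) :: extAux m (b - a).toNat (longEnd m (a - 1))

def applyExt : Multiset Seg → ℤ → List (Option Seg) → Multiset Seg
  | acc, _, [] => acc
  | acc, i, some Δ :: rest => applyExt (pushSeg (acc.erase Δ) Δ.1 (Δ.2 + 1)) (i + 1) rest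
  | acc, i, none :: rest => applyExt (acc + {(i + 1, i + 1)}) (i + 1) rest

/-- The Zelevinsky integral algorithm `ℐ^Zel_{[a,b]}`. -/
def IZel (a b : ℤ) (m : Multiset Seg) : Multiset Seg :=
  applyExt m (a - 1) (extList (izRem a b m) a b)

/-- `Δ̃⁺` for a possibly void `Δ̃` at position `i` (for the void segment at
position `i` this is the singleton `[i+1,i+1]`). -/
def plusAt (i : ℤ) : Option Seg → Seg
  | some Δ => (Δ.1, Δ.2 + 1)
  | none => (i + 1, i + 1)

def plusList : ℤ → List (Option Seg) → List Seg
  | _, [] => []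
  | i, o :: rest => plusAt i o :: plusList (i + 1) rest

/-- `n₁` and `n₂` are linked by mapping: there is an injective map `f : n₁ → n₂`
with `Δ ≺ f(Δ)` for all `Δ ∈ n₁`. -/
def LinkedByMapping (n₁ n₂ : Multiset Seg) : Prop :=
  ∃ n₂' ≤ n₂, Multiset.Rel Prec n₁ n₂'

def startsSorted (n : Multiset Seg) : List ℤ := (n.map Prod.fst).sort (· ≤ ·)

/-- `n₁' < n₁` for multisegments of segments ending at a common point, compared
via their sorted lists of starting points. -/
def MSLtStarts (n₁' n₁ : Multiset Seg) : Prop :=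
  startsSorted n₁' ≠ startsSorted n₁ ∧
    List.Forall₂ (· ≤ ·) (startsSorted n₁) (startsSorted n₁')

/-- `n₁ ⊆ m⟨k-1⟩` and `n₂ ⊆ m⟨k⟩` are minimally linked in `m`. -/
def MinLinked (m : Multiset Seg) (k : ℤ) (n₁ n₂ : Multiset Seg) : Prop :=
  n₁ ≤ endAt m (k - 1) ∧ n₂ ≤ endAt m k ∧ LinkedByMapping n₁ n₂ ∧
    (∀ n₁' ≤ endAt m (k - 1), LinkedByMapping n₁' n₂ → n₁'.card ≤ n₁.card) ∧
    (∀ n₁' ≤ endAt m (k - 1), n₁'.card = n₁.card → MSLtStarts n₁' n₁ →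
      ¬LinkedByMapping n₁' n₂)

/-- The non-free sections of a row of an upward-sequence decomposition. -/
def nfRow : List Seg → Multiset Seg
  | [] => 0
  | [_] => 0
  | Δ :: Δ' :: rest => pushSeg (nfRow (Δ' :: rest)) (Δ'.1 - 1) Δ.2

/-- `𝔡(m)`, the sum of all non-free sections. -/
def frakd (m : Multiset Seg) : Multiset Seg :=
  (usDecomp m.card m).foldl (fun acc row => acc + nfRow row) 0

def DrhoPow (t : ℤ) : ℕ → Multiset Seg → Option (Multiset Seg)
  | 0, m => some m
  | k + 1, m => (Drho t m).bind (DrhoPow t k)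

/-- `(𝒟_{[a+n-1]})^{ε_{a+n-1}} ∘ ⋯ ∘ (𝒟_{[a]})^{ε_a}(m)` where at each stage `t`
the exponent is `ε_t = ε_{[t]}` of the current multisegment; `none` codes that
some derivative in the composition is `∞`. -/
def hdComp : ℕ → ℤ → Multiset Seg → Option (Multiset Seg)
  | 0, _, m => some m
  | k + 1, t, m =>
    match DrhoPow t (epsA t m) m with
    | none => none
    | some m' => hdComp k (t + 1) m'


theorem msetMax_spec {s : Multiset ℤ} {x : ℤ} : msetMax s = some x ↔ x ∈ s ∧ ∀ y ∈ s, y ≤ x := by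
  unfold msetMax
  split
  · rename_i h; subst h; simp
  · rename_i h
    constructor
    · rintro ⟨rfl⟩
      refine ⟨Multiset.mem_toFinset.mp (s.toFinset.max'_mem _), fun y hy => Finset.le_max' _ _ (Multiset.mem_toFinset.mpr hy)⟩
    · rintro ⟨hx, hb⟩
      congr 1
      exact le_antisymm (Finset.max'_le _ _ _ (fun y hy => hb y (Multiset.mem_toFinset.mp hy))) (Finset.le_max' _ _ (Multiset.mem_toFinset.mpr hx))
theorem msetMax_eq_none {s : Multiset ℤ} : msetMax s = none ↔ s = 0 := by
  unfold msetMax; split <;> simp_all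
theorem msetMin_spec {s : Multiset ℤ} {x : ℤ} : msetMin s = some x ↔ x ∈ s ∧ ∀ y ∈ s, x ≤ y := by
  unfold msetMin
  split
  · rename_i h; subst h; simp
  · rename_i h
    constructor
    · rintro ⟨rfl⟩
      refine ⟨Multiset.mem_toFinset.mp (s.toFinset.min'_mem _), fun y hy => Finset.min'_le _ _ (Multiset.mem_toFinset.mpr hy)⟩
    · rintro ⟨hx, hb⟩
      congr 1
      exact le_antisymm (Finset.min'_le _ _ (Multiset.mem_toFinset.mpr hx)) (Finset.le_min' _ _ _ (fun y hy => hb y (Multiset.mem_toFinset.mp hy)))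
theorem msetMin_eq_none {s : Multiset ℤ} : msetMin s = none ↔ s = 0 := by
  unfold msetMin; split <;> simp_all
theorem mem_endAt {m : Multiset Seg} {Δ : Seg} {i : ℤ} : Δ ∈ endAt m i ↔ Δ ∈ m ∧ Δ.2 = i := by
  simp [endAt]

theorem endAt_add (s t : Multiset Seg) (i : ℤ) : endAt (s + t) i = endAt s i + endAt t i :=
  Multiset.filter_add _ _ _

theorem endAt_zero (i : ℤ) : endAt 0 i = 0 := rfl

theorem endAt_singleton (Δ : Seg) (i : ℤ) :
    endAt ({Δ} : Multiset Seg) i = if Δ.2 = i then ({Δ} : Multiset Seg) else 0 := by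
  simp [endAt, Multiset.filter_singleton]

theorem endAt_pushSeg (s : Multiset Seg) (x y i : ℤ) :
    endAt (pushSeg s x y) i = endAt s i + (if x ≤ y ∧ y = i then ({(x,y)} : Multiset Seg) else 0) := by
  unfold pushSeg
  split
  · rw [endAt_add, endAt_singleton]
    rename_i h; simp [h]
  · rename_i h; simp [h]

theorem endAt_erase_eq {s : Multiset Seg} {Δ : Seg} {i : ℤ} (h : Δ.2 = i) :
    endAt (s.erase Δ) i = (endAt s i).erase Δ := by
  ext a
  by_cases ha : a = Δ
  · subst ha
    simp [endAt, Multiset.count_filter, Multiset.count_erase_self, h]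
  · rw [Multiset.count_erase_of_ne ha, endAt, endAt, Multiset.count_filter, Multiset.count_filter,
      Multiset.count_erase_of_ne ha]

theorem endAt_erase_ne {s : Multiset Seg} {Δ : Seg} {i : ℤ} (h : Δ.2 ≠ i) :
    endAt (s.erase Δ) i = endAt s i := by
  ext a
  by_cases ha : a = Δ
  · subst ha
    simp [endAt, Multiset.count_filter, h]
  · rw [endAt, endAt, Multiset.count_filter, Multiset.count_filter, Multiset.count_erase_of_ne ha]

theorem erase_add_singleton_ne {s : Multiset Seg} {d p : Seg} (h : d ≠ p) :
    (s + ({p} : Multiset Seg)).erase d = s.erase d + ({p} : Multiset Seg) := by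
  ext a
  by_cases ha : a = d
  · subst ha
    simp only [Multiset.count_add, Multiset.count_erase_self, Multiset.count_singleton,
      if_neg h]
    omega
  · simp [Multiset.count_erase_of_ne ha]

theorem prec_consec {Δ p : Seg} (h1 : Δ.2 = p.2 - 1) (h2 : p.1 ≤ p.2) : Prec Δ p ↔ Δ.1 < p.1 := by
  unfold Prec; omega

theorem ends_le_of_msetMax {m : Multiset Seg} {c : ℤ} (hc : msetMax (m.map Prod.snd) = some c) :
    ∀ Δ ∈ m, Δ.2 ≤ c := by
  intro Δ hΔ
  exact (msetMax_spec.mp hc).2 _ (Multiset.mem_map_of_mem _ hΔ)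

theorem endAt_max_ne {m : Multiset Seg} {c : ℤ} (hc : msetMax (m.map Prod.snd) = some c) :
    endAt m c ≠ 0 := by
  obtain ⟨hmem, -⟩ := msetMax_spec.mp hc
  obtain ⟨Δ, hΔ, h2⟩ := Multiset.mem_map.mp hmem
  intro h0
  exact absurd (mem_endAt.mpr ⟨hΔ, h2⟩) (by simp [h0])
/-- Well-formedness of a list of optional segments relative to a base position. -/
def WFL : ℤ → List (Option Seg) → Prop
  | _, [] => True
  | i, o :: rest => (∀ Δ, o = some Δ → Δ.1 ≤ i ∧ Δ.2 = i) ∧ WFL (i+1) rest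

theorem applyExt_append (L1 L2 : List (Option Seg)) (acc : Multiset Seg) (i : ℤ) :
    applyExt acc i (L1 ++ L2) = applyExt (applyExt acc i L1) (i + L1.length) L2 := by
  induction L1 generalizing acc i with
  | nil => simp [applyExt]
  | cons o rest ih =>
    cases o with
    | some Δ =>
      show applyExt (pushSeg (acc.erase Δ) Δ.1 (Δ.2+1)) (i+1) (rest ++ L2) = _
      rw [ih]
      congr 1
      simp only [List.length_cons]
      push_cast; ring
    | none =>
      show applyExt (acc + {(i+1,i+1)}) (i+1) (rest ++ L2) = _
      rw [ih]
      congr 1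
      simp only [List.length_cons]
      push_cast; ring

theorem endAt_applyExt_lt (O : List (Option Seg)) :
    ∀ (acc : Multiset Seg) (i j : ℤ), WFL i O → j < i →
      endAt (applyExt acc i O) j = endAt acc j := by
  induction O with
  | nil => intro acc i j _ _; rfl
  | cons o rest ih =>
    intro acc i j hw hj
    cases o with
    | some Δ =>
      obtain ⟨h1, h2⟩ := hw.1 Δ rfl
      show endAt (applyExt (pushSeg (acc.erase Δ) Δ.1 (Δ.2+1)) (i+1) rest) j = _
      rw [ih _ _ _ hw.2 (by omega), endAt_pushSeg, if_neg (by omega), add_zero,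
        endAt_erase_ne (by omega)]
    | none =>
      show endAt (applyExt (acc + {(i+1,i+1)}) (i+1) rest) j = _
      rw [ih _ _ _ hw.2 (by omega), endAt_add, endAt_singleton, if_neg (by first | (simp; omega) | simp)]
      simp

theorem ends_le_applyExt (O : List (Option Seg)) :
    ∀ (acc : Multiset Seg) (i C : ℤ), WFL i O → i + O.length ≤ C →
      (∀ Δ ∈ acc, Δ.2 ≤ C) → ∀ Δ ∈ applyExt acc i O, Δ.2 ≤ C := by
  induction O with
  | nil => intro acc i C _ _ hacc; exact hacc
  | cons o rest ih =>
    intro acc i C hw hlen hacc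
    have hlen' : (i+1) + (rest.length : ℤ) ≤ C := by
      simp only [List.length_cons] at hlen; push_cast at hlen ⊢; omega
    cases o with
    | some Δ =>
      obtain ⟨h1, h2⟩ := hw.1 Δ rfl
      refine ih _ _ _ hw.2 hlen' ?_
      intro q hq
      unfold pushSeg at hq
      split at hq
      · rcases Multiset.mem_add.mp hq with h | h
        · exact hacc _ (Multiset.mem_of_mem_erase h)
        · rw [Multiset.mem_singleton.mp h]; simpa using by omega
      · exact hacc _ (Multiset.mem_of_mem_erase hq)
    | none =>
      refine ih _ _ _ hw.2 hlen' ?_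
      intro q hq
      rcases Multiset.mem_add.mp hq with h | h
      · exact hacc _ h
      · rw [Multiset.mem_singleton.mp h]; simpa using by omega

theorem endAt_applyExt_head_some (O : List (Option Seg)) (Δ : Seg) (acc : Multiset Seg) (i : ℤ)
    (hw : WFL i (some Δ :: O)) :
    endAt (applyExt acc i (some Δ :: O)) i = (endAt acc i).erase Δ := by
  obtain ⟨h1, h2⟩ := hw.1 Δ rfl
  show endAt (applyExt (pushSeg (acc.erase Δ) Δ.1 (Δ.2+1)) (i+1) O) i = _
  rw [endAt_applyExt_lt _ _ _ _ hw.2 (by omega), endAt_pushSeg, if_neg (by omega), add_zero,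
    endAt_erase_eq h2]

theorem endAt_applyExt_head_none (O : List (Option Seg)) (acc : Multiset Seg) (i : ℤ)
    (hw : WFL i (none :: O)) :
    endAt (applyExt acc i (none :: O)) i = endAt acc i := by
  show endAt (applyExt (acc + {(i+1,i+1)}) (i+1) O) i = _
  rw [endAt_applyExt_lt _ _ _ _ hw.2 (by omega), endAt_add, endAt_singleton,
    if_neg (by first | (simp; omega) | simp)]
  simp

theorem endAt_applyExt_top (O : List (Option Seg)) :
    ∀ (o' : Option Seg) (acc : Multiset Seg) (i : ℤ), WFL i (O ++ [o']) →
      endAt (applyExt acc i (O ++ [o'])) (i + O.length + 1)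
        = endAt acc (i + O.length + 1) + {plusAt (i + O.length) o'} := by
  induction O with
  | nil =>
    intro o' acc i hw
    simp only [List.length_nil, Nat.cast_zero, add_zero]
    cases o' with
    | some Δ =>
      obtain ⟨h1, h2⟩ := hw.1 Δ rfl
      show endAt (pushSeg (acc.erase Δ) Δ.1 (Δ.2+1)) (i+1) = _
      rw [endAt_pushSeg, if_pos ⟨by omega, by omega⟩, endAt_erase_ne (by omega)]
      rfl
    | none =>
      show endAt (acc + {(i+1,i+1)}) (i+1) = _
      rw [endAt_add, endAt_singleton, if_pos rfl]
      rfl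
  | cons o rest ih =>
    intro o' acc i hw
    have harith : i + ((o :: rest).length : ℤ) + 1 = (i+1) + rest.length + 1 := by
      simp only [List.length_cons]; push_cast; ring
    have harith2 : i + ((o :: rest).length : ℤ) = (i+1) + rest.length := by
      simp only [List.length_cons]; push_cast; ring
    cases o with
    | some Δ =>
      obtain ⟨h1, h2⟩ := hw.1 Δ rfl
      show endAt (applyExt (pushSeg (acc.erase Δ) Δ.1 (Δ.2+1)) (i+1) (rest ++ [o'])) _ = _
      rw [harith, harith2, ih _ _ _ hw.2, endAt_pushSeg, if_neg (by omega), add_zero,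
        endAt_erase_ne (by omega)]
    | none =>
      show endAt (applyExt (acc + {(i+1,i+1)}) (i+1) (rest ++ [o'])) _ = _
      rw [harith, harith2, ih _ _ _ hw.2, endAt_add, endAt_singleton, if_neg (by first | (simp; omega) | simp)]
      simp

/-- A strictly-decreasing-starts chain of segments of `m` at consecutive ends below `(e, x)`. -/
def ChainDn (m : Multiset Seg) : ℕ → ℤ → ℤ → Prop
  | 0, _, _ => True
  | k+1, e, x => ∃ Δ, Δ ∈ endAt m (e-1) ∧ Δ.1 < x ∧ ChainDn m k (e-1) Δ.1

theorem chainDn_mono {m : Multiset Seg} : ∀ {k : ℕ} {e x x' : ℤ}, ChainDn m k e x → x ≤ x' →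
    ChainDn m k e x' := by
  intro k e x x' h hle
  cases k with
  | zero => trivial
  | succ k =>
    obtain ⟨Δ, h1, h2, h3⟩ := h
    exact ⟨Δ, h1, by omega, h3⟩

theorem downNbrAux_ne_none {m : Multiset Seg} (hm : IsMS m) :
    ∀ (k : ℕ) (p : Seg), p ∈ m → ChainDn m k p.2 p.1 → downNbrAux m k p ≠ none := by
  intro k
  induction k with
  | zero => intro p _ _; simp [downNbrAux]
  | succ k ih =>
    intro p hp hch
    obtain ⟨Δ, h1, h2, h3⟩ := hch
    have hpg : p.1 ≤ p.2 := hm p hp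
    have hΔend : Δ.2 = p.2 - 1 := (mem_endAt.mp h1).2
    have hprec : Prec Δ p := (prec_consec hΔend hpg).mpr h2
    have hmem : Δ.1 ∈ ((endAt m (p.2 - 1)).filter fun q => Prec q p).map Prod.fst :=
      Multiset.mem_map_of_mem _ (Multiset.mem_filter.mpr ⟨h1, hprec⟩)
    have hne : ((endAt m (p.2 - 1)).filter fun q => Prec q p).map Prod.fst ≠ 0 := by
      intro h0; rw [h0] at hmem; simp at hmem
    obtain ⟨x, hx⟩ : ∃ x, msetMax (((endAt m (p.2 - 1)).filter fun q => Prec q p).map Prod.fst) = some x := by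
      cases hmx : msetMax (((endAt m (p.2 - 1)).filter fun q => Prec q p).map Prod.fst) with
      | none => exact absurd (msetMax_eq_none.mp hmx) hne
      | some x => exact ⟨x, rfl⟩
    obtain ⟨hxmem, hxmax⟩ := msetMax_spec.mp hx
    obtain ⟨Δ', hΔ', hΔ'1⟩ := Multiset.mem_map.mp hxmem
    have hΔ'2 : Δ' ∈ endAt m (p.2-1) := (Multiset.mem_filter.mp hΔ').1
    have heq : Δ' = (x, p.2 - 1) := Prod.ext hΔ'1 (mem_endAt.mp hΔ'2).2
    have hrec : downNbrAux m k (x, p.2 - 1) ≠ none := by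
      refine ih (x, p.2-1) ?_ ?_
      · rw [← heq]; exact (mem_endAt.mp hΔ'2).1
      · have : Δ.1 ≤ x := hxmax _ hmem
        exact chainDn_mono h3 this
    show (match msetMax (((endAt m (p.2 - 1)).filter fun q => Prec q p).map Prod.fst) with
      | none => none
      | some x => (downNbrAux m k (x, p.2 - 1)).map fun l => p :: l) ≠ none
    rw [hx]
    simp only [ne_eq, Option.map_eq_none_iff]
    exact hrec

theorem extAux_eq (m : Multiset Seg) :
    ∀ (k : ℕ) (q : Option Seg),
      extAux m k q = (List.range k).map fun t => (fun r => r.bind (extNext m))^[t+1] q := by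
  intro k
  induction k with
  | zero => intro q; rfl
  | succ k ih =>
    intro q
    show (q.bind (extNext m)) :: extAux m k (q.bind (extNext m)) = _
    rw [ih, List.range_succ_eq_map, List.map_cons, List.map_map]
    rfl

theorem extList_eq (m : Multiset Seg) (a b : ℤ) :
    extList m a b = (List.range ((b-a).toNat + 1)).map
      fun j => (fun r => r.bind (extNext m))^[j] (longEnd m (a-1)) := by
  show longEnd m (a-1) :: extAux m (b-a).toNat (longEnd m (a-1)) = _
  rw [extAux_eq, List.range_succ_eq_map, List.map_cons, List.map_map]
  rfl

theorem plusList_map_range :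
    ∀ (k : ℕ) (g : ℕ → Option Seg) (i : ℤ),
      plusList i ((List.range k).map g) = (List.range k).map fun (t:ℕ) => plusAt (i + (t:ℤ)) (g t) := by
  intro k
  induction k with
  | zero => intro g i; rfl
  | succ k ih =>
    intro g i
    rw [List.range_succ_eq_map, List.map_cons, List.map_cons, List.map_map, List.map_map]
    show plusAt i (g 0) :: plusList (i+1) (List.map (g ∘ Nat.succ) (List.range k)) = _
    rw [ih]
    refine congrArg₂ List.cons (by norm_num) ?_
    apply List.map_congr_left
    intro t _
    simp only [Function.comp_apply, Nat.succ_eq_add_one]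
    congr 1
    push_cast
    ring

theorem WFL_map_range :
    ∀ (k : ℕ) (g : ℕ → Option Seg) (i : ℤ),
      (∀ t < k, ∀ Δ, g t = some Δ → Δ.1 ≤ i + t ∧ Δ.2 = i + t) →
      WFL i ((List.range k).map g) := by
  intro k
  induction k with
  | zero => intro g i _; trivial
  | succ k ih =>
    intro g i hg
    rw [List.range_succ_eq_map, List.map_cons, List.map_map]
    refine ⟨fun Δ h => by simpa using hg 0 (by omega) Δ h, ?_⟩
    refine ih _ _ ?_
    intro t ht Δ h
    have := hg (t+1) (by omega) Δ h
    push_cast at this ⊢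
    constructor <;> omega
theorem longEnd_some_spec {m : Multiset Seg} {i : ℤ} {Δ : Seg} (h : longEnd m i = some Δ) :
    Δ ∈ m ∧ Δ.2 = i ∧ ∀ q ∈ endAt m i, Δ.1 ≤ q.1 := by
  unfold longEnd at h
  rw [Option.map_eq_some_iff] at h
  obtain ⟨x, hx, hΔ⟩ := h
  obtain ⟨hxm, hxmin⟩ := msetMin_spec.mp hx
  obtain ⟨q, hq, hq1⟩ := Multiset.mem_map.mp hxm
  have hq2 : q = Δ := by
    rw [← hΔ]; exact Prod.ext hq1 (mem_endAt.mp hq).2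
  subst hq2
  refine ⟨(mem_endAt.mp hq).1, (mem_endAt.mp hq).2, ?_⟩
  intro r hr
  have := hxmin _ (Multiset.mem_map_of_mem Prod.fst hr)
  rw [← hΔ] at *
  exact this

theorem longEnd_none_spec {m : Multiset Seg} {i : ℤ} (h : longEnd m i = none) :
    endAt m i = 0 := by
  unfold longEnd at h
  rw [Option.map_eq_none_iff] at h
  have := msetMin_eq_none.mp h
  exact Multiset.map_eq_zero.mp this

theorem extNext_some_spec {m : Multiset Seg} {p Δ : Seg} (h : extNext m p = some Δ) :
    Δ ∈ m ∧ Δ.2 = p.2 + 1 ∧ Prec p Δ ∧ ∀ q ∈ endAt m (p.2+1), Prec p q → Δ.1 ≤ q.1 := by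
  unfold extNext at h
  rw [Option.map_eq_some_iff] at h
  obtain ⟨x, hx, hΔ⟩ := h
  obtain ⟨hxm, hxmin⟩ := msetMin_spec.mp hx
  obtain ⟨q, hq, hq1⟩ := Multiset.mem_map.mp hxm
  have hqf := Multiset.mem_filter.mp hq
  have hq2 : q = Δ := by
    rw [← hΔ]; exact Prod.ext hq1 (mem_endAt.mp hqf.1).2
  subst hq2
  refine ⟨(mem_endAt.mp hqf.1).1, (mem_endAt.mp hqf.1).2, hqf.2, ?_⟩
  intro r hr hpr
  have := hxmin _ (Multiset.mem_map_of_mem Prod.fst (Multiset.mem_filter.mpr ⟨hr, hpr⟩))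
  rw [← hΔ] at *
  exact this

theorem extNext_none_spec {m : Multiset Seg} {p : Seg} (h : extNext m p = none) :
    ∀ q ∈ endAt m (p.2+1), ¬ Prec p q := by
  unfold extNext at h
  rw [Option.map_eq_none_iff] at h
  have h0 := Multiset.map_eq_zero.mp (msetMin_eq_none.mp h)
  intro q hq hpq
  have : q ∈ (endAt m (p.2+1)).filter fun Δ => Prec p Δ := Multiset.mem_filter.mpr ⟨hq, hpq⟩
  rw [h0] at this
  simp at this

/-- The `j`-th segment chosen in the extension process. -/
def extO (m : Multiset Seg) (b : ℤ) (j : ℕ) : Option Seg :=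
  (fun r => r.bind (extNext m))^[j] (longEnd m (b-1))

theorem extO_zero (m : Multiset Seg) (b : ℤ) : extO m b 0 = longEnd m (b-1) := rfl

theorem extO_succ (m : Multiset Seg) (b : ℤ) (j : ℕ) :
    extO m b (j+1) = (extO m b j).bind (extNext m) := Function.iterate_succ_apply' _ _ _

theorem extO_spec {m : Multiset Seg} (hm : IsMS m) {b : ℤ} :
    ∀ {j : ℕ} {Δ : Seg}, extO m b j = some Δ → Δ ∈ m ∧ Δ.2 = b-1+j ∧ Δ.1 ≤ b-1+j := by
  intro j
  induction j with
  | zero =>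
    intro Δ h
    rw [extO_zero] at h
    obtain ⟨h1, h2, _⟩ := longEnd_some_spec h
    have := hm Δ h1
    refine ⟨h1, by push_cast; omega, by push_cast; omega⟩
  | succ j ih =>
    intro Δ h
    rw [extO_succ] at h
    rcases hp : extO m b j with _ | p
    · rw [hp] at h; simp at h
    · rw [hp] at h
      simp only [Option.bind_some] at h
      obtain ⟨h1, h2, _, _⟩ := extNext_some_spec h
      obtain ⟨_, hp2, _⟩ := ih hp
      have := hm Δ h1
      refine ⟨h1, by push_cast; omega, by push_cast; omega⟩

theorem extO_chain {m : Multiset Seg} {b : ℤ} {j : ℕ} {Δ' : Seg}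
    (h : extO m b (j+1) = some Δ') :
    ∃ Δ, extO m b j = some Δ ∧ extNext m Δ = some Δ' ∧ Δ.1 < Δ'.1 := by
  rw [extO_succ] at h
  rcases hp : extO m b j with _ | p
  · rw [hp] at h; simp at h
  · rw [hp] at h
    simp only [Option.bind_some] at h
    exact ⟨p, rfl, h, (extNext_some_spec h).2.2.1.1⟩

theorem izRem_eq_self {m : Multiset Seg} (hne : m ≠ 0) {a b : ℤ}
    (hno : downSeqNbr m a b = none) : izRem a b m = m := by
  unfold izRem
  rcases hk : Multiset.card m with _ | k
  · exact absurd (Multiset.card_eq_zero.mp hk) hne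
  · show izRemF a b (k+1) m = m
    unfold izRemF
    rw [hno]

/-- The list of (optional) segments chosen in the extension process. -/
def extListO (m : Multiset Seg) (b c : ℤ) : List (Option Seg) :=
  (List.range ((c-b).toNat + 1)).map (extO m b)

/-- The result of the extension process. -/
def mprime (m : Multiset Seg) (b c : ℤ) : Multiset Seg := applyExt m (b-1) (extListO m b c)

/-- The `j`-th added segment of the extension process. -/
def PP (m : Multiset Seg) (b : ℤ) (j : ℕ) : Seg := plusAt (b-1+(j:ℤ)) (extO m b j)

theorem extList_eq' (m : Multiset Seg) (b c : ℤ) : extList m b c = extListO m b c :=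
  extList_eq m b c

theorem L_wfl {m : Multiset Seg} (hm : IsMS m) (b : ℤ) (k r : ℕ) :
    WFL (b-1+(k:ℤ)) ((List.range r).map (fun t => extO m b (k+t))) := by
  refine WFL_map_range r _ _ ?_
  intro t _ Δ h
  obtain ⟨_, h2, h3⟩ := extO_spec hm h
  push_cast at h2 h3 ⊢
  constructor <;> omega

theorem L_split {m : Multiset Seg} (b c : ℤ) {j : ℕ} (hj : j ≤ (c-b).toNat) :
    extListO m b c = (List.range (j+1)).map (extO m b)
      ++ (List.range ((c-b).toNat - j)).map (fun t => extO m b ((j+1)+t)) := by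
  unfold extListO
  have : (c-b).toNat + 1 = (j+1) + ((c-b).toNat - j) := by omega
  rw [this, List.range_add, List.map_append, List.map_map]
  rfl

theorem L_trunc {m : Multiset Seg} (hm : IsMS m) (b c : ℤ) {j : ℕ} (hj : j ≤ (c-b).toNat) :
    endAt (mprime m b c) (b-1+(j:ℤ))
      = endAt (applyExt m (b-1) ((List.range (j+1)).map (extO m b))) (b-1+(j:ℤ)) := by
  unfold mprime
  rw [L_split b c hj, applyExt_append]
  have hlen : (((List.range (j+1)).map (extO m b)).length : ℤ) = (j:ℤ)+1 := by
    simp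
  rw [hlen]
  have hw := L_wfl hm b (j+1) ((c-b).toNat - j)
  have harr : b - 1 + ((j:ℤ)+1) = b - 1 + ((j+1:ℕ):ℤ) := by push_cast; ring
  rw [harr]
  exact endAt_applyExt_lt _ _ _ _ hw (by push_cast; omega)

theorem L_top {m : Multiset Seg} (hm : IsMS m) (b : ℤ) (j : ℕ) :
    endAt (applyExt m (b-1) ((List.range (j+1)).map (extO m b))) (b-1+(j:ℤ)+1)
      = endAt m (b-1+(j:ℤ)+1) + {PP m b j} := by
  have hw0 := L_wfl hm b 0 (j+1)
  simp only [Nat.zero_add, Nat.cast_zero, add_zero] at hw0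
  rw [List.range_succ, List.map_append] at hw0 ⊢
  simp only [List.map_cons, List.map_nil] at hw0 ⊢
  have := endAt_applyExt_top ((List.range j).map (extO m b)) (extO m b j) m (b-1) hw0
  have hlen : (((List.range j).map (extO m b)).length : ℤ) = (j:ℤ) := by simp
  rw [hlen] at this
  exact this

theorem L_S0_some {m : Multiset Seg} (hm : IsMS m) (b c : ℤ) {Δ : Seg}
    (h0 : extO m b 0 = some Δ) :
    endAt (mprime m b c) (b-1) = (endAt m (b-1)).erase Δ := by
  have htr := L_trunc hm b c (j := 0) (by omega)
  norm_num at htr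
  rw [htr]
  have hsp := extO_spec hm h0
  norm_num at hsp
  have hw : WFL (b-1) [some Δ] := by
    refine ⟨?_, trivial⟩
    intro Δ' hΔ'
    injection hΔ' with e
    subst e
    exact ⟨by have := hsp.2.2; omega, hsp.2.1⟩
  have hl : (List.range 1).map (extO m b) = [some Δ] := by
    show [extO m b 0] = [some Δ]
    rw [h0]
  rw [h0]
  exact endAt_applyExt_head_some [] Δ m (b-1) hw

theorem L_S0_none {m : Multiset Seg} (hm : IsMS m) (b c : ℤ)
    (h0 : extO m b 0 = none) :
    endAt (mprime m b c) (b-1) = endAt m (b-1) := by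
  have htr := L_trunc hm b c (j := 0) (by omega)
  norm_num at htr
  rw [htr]
  have hw : WFL (b-1) [(none : Option Seg)] := by
    refine ⟨?_, trivial⟩
    intro Δ' hΔ'
    cases hΔ'
  have hl : (List.range 1).map (extO m b) = [none] := by
    show [extO m b 0] = [none]
    rw [h0]
  rw [h0]
  exact endAt_applyExt_head_none [] m (b-1) hw

theorem L_Smid_core {m : Multiset Seg} (hm : IsMS m) (b c : ℤ) {j : ℕ} (hj : j+1 ≤ (c-b).toNat) :
    endAt (mprime m b c) (b-1+(j:ℤ)+1)
      = endAt (applyExt (applyExt m (b-1) ((List.range (j+1)).map (extO m b)))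
          (b-1+(j:ℤ)+1) [extO m b (j+1)]) (b-1+(j:ℤ)+1) := by
  have htr := L_trunc hm b c (j := j+1) hj
  push_cast at htr
  rw [show b - 1 + ((j:ℤ)+1) = b - 1 + (j:ℤ) + 1 from by ring] at htr
  rw [htr]
  rw [List.range_succ (n := j+1), List.map_append, applyExt_append]
  have hlen : (((List.range (j+1)).map (extO m b)).length : ℤ) = (j:ℤ)+1 := by simp
  rw [hlen]
  rw [show b - 1 + ((j:ℤ)+1) = b - 1 + (j:ℤ) + 1 from by ring]
  rfl

theorem L_Smid_some {m : Multiset Seg} (hm : IsMS m) (b c : ℤ) {j : ℕ}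
    (hj : j+1 ≤ (c-b).toNat) {Δ : Seg} (hΔ : extO m b (j+1) = some Δ) :
    endAt (mprime m b c) (b-1+(j:ℤ)+1)
      = (endAt m (b-1+(j:ℤ)+1)).erase Δ + {PP m b j} := by
  rw [L_Smid_core hm b c hj]
  have hsp := extO_spec hm hΔ
  push_cast at hsp
  have hw : WFL (b-1+(j:ℤ)+1) [some Δ] := by
    refine ⟨?_, trivial⟩
    intro Δ' hΔ'
    injection hΔ' with e
    subst e
    constructor <;> omega
  rw [hΔ, endAt_applyExt_head_some [] Δ _ _ hw, L_top hm b j]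
  obtain ⟨p, hp, _, hlt⟩ := extO_chain hΔ
  have hne : Δ ≠ PP m b j := by
    intro he
    have : (PP m b j).1 = p.1 := by simp [PP, plusAt, hp]
    rw [← he] at this
    omega
  exact erase_add_singleton_ne hne

theorem L_Smid_none {m : Multiset Seg} (hm : IsMS m) (b c : ℤ) {j : ℕ}
    (hj : j+1 ≤ (c-b).toNat) (hΔ : extO m b (j+1) = none) :
    endAt (mprime m b c) (b-1+(j:ℤ)+1)
      = endAt m (b-1+(j:ℤ)+1) + {PP m b j} := by
  rw [L_Smid_core hm b c hj]
  have hw : WFL (b-1+(j:ℤ)+1) [(none : Option Seg)] :=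
    ⟨fun Δ' hΔ' => (nomatch hΔ'), trivial⟩
  rw [hΔ, endAt_applyExt_head_none [] _ _ hw, L_top hm b j]

theorem L_SN1 {m : Multiset Seg} (hm : IsMS m) {b c : ℤ} (hbc : b ≤ c) :
    endAt (mprime m b c) c = endAt m c + {PP m b (c-b).toNat} := by
  have hN : (((c-b).toNat : ℕ) : ℤ) = c - b := Int.toNat_of_nonneg (by omega)
  have := L_top hm b (c-b).toNat
  rw [show b - 1 + (((c-b).toNat : ℕ) : ℤ) + 1 = c from by omega] at this
  unfold mprime extListO
  exact this

theorem PP_snd {m : Multiset Seg} (hm : IsMS m) (b : ℤ) (j : ℕ) : (PP m b j).2 = b + (j:ℤ) := by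
  unfold PP
  rcases h : extO m b j with _ | Δ
  · show b-1+(j:ℤ)+1 = _; ring
  · obtain ⟨_, h2, _⟩ := extO_spec hm h
    show Δ.2 + 1 = _
    omega

theorem PP_fst_le_snd {m : Multiset Seg} (hm : IsMS m) (b : ℤ) (j : ℕ) :
    (PP m b j).1 ≤ (PP m b j).2 := by
  unfold PP
  rcases h : extO m b j with _ | Δ
  · exact le_refl _
  · obtain ⟨_, h2, h3⟩ := extO_spec hm h
    show Δ.1 ≤ Δ.2 + 1
    omega

theorem PP_fst_lt {m : Multiset Seg} (hm : IsMS m) (b : ℤ) (j : ℕ) :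
    (PP m b j).1 < (PP m b (j+1)).1 := by
  rcases h : extO m b (j+1) with _ | Δ'
  · have h1 := PP_fst_le_snd hm b j
    have h2 := PP_snd hm b j
    have : (PP m b (j+1)).1 = b + (j:ℤ) + 1 := by
      unfold PP; rw [h]; show b-1+((j:ℕ)+1:ℤ)+1 = _; push_cast; ring
    push_cast at this ⊢
    omega
  · obtain ⟨p, hp, _, hlt⟩ := extO_chain h
    have e1 : (PP m b j).1 = p.1 := by unfold PP; rw [hp]; rfl
    have e2 : (PP m b (j+1)).1 = Δ'.1 := by unfold PP; rw [h]; rfl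
    omega

theorem L_chain {m : Multiset Seg} (hm : IsMS m) (b : ℤ) :
    ∀ (j : ℕ) {Δt : Seg}, extO m b j = some Δt → ∀ x, Δt.1 < x →
      ChainDn m (j+1) (b+(j:ℤ)) x := by
  intro j
  induction j with
  | zero =>
    intro Δt h x hx
    obtain ⟨h1, h2, _⟩ := extO_spec hm h
    show ∃ Δ, Δ ∈ endAt m (b+((0:ℕ):ℤ)-1) ∧ Δ.1 < x ∧ ChainDn m 0 (b+((0:ℕ):ℤ)-1) Δ.1
    exact ⟨Δt, mem_endAt.mpr ⟨h1, by push_cast at h2 ⊢; omega⟩, hx, trivial⟩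
  | succ j ih =>
    intro Δt h x hx
    obtain ⟨p, hp, _, hlt⟩ := extO_chain h
    obtain ⟨h1, h2, _⟩ := extO_spec hm h
    show ∃ Δ, Δ ∈ endAt m (b+((j+1:ℕ):ℤ)-1) ∧ Δ.1 < x ∧ ChainDn m (j+1) (b+((j+1:ℕ):ℤ)-1) Δ.1
    refine ⟨Δt, mem_endAt.mpr ⟨h1, by push_cast at h2 ⊢; omega⟩, hx, ?_⟩
    have := ih hp Δt.1 hlt
    rw [show b+((j+1:ℕ):ℤ)-1 = b+((j:ℕ):ℤ) from by push_cast; ring]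
    exact this

theorem shortEnd_spec {m : Multiset Seg} {i : ℤ} (hne : endAt m i ≠ 0) :
    ∃ Δ, shortEnd m i = some Δ ∧ Δ ∈ m ∧ Δ.2 = i ∧ ∀ q ∈ endAt m i, q.1 ≤ Δ.1 := by
  have hmapne : (endAt m i).map Prod.fst ≠ 0 := by
    intro h; exact hne (Multiset.map_eq_zero.mp h)
  obtain ⟨x, hx⟩ : ∃ x, msetMax ((endAt m i).map Prod.fst) = some x := by
    cases hmx : msetMax ((endAt m i).map Prod.fst) with
    | none => exact absurd (msetMax_eq_none.mp hmx) hmapne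
    | some x => exact ⟨x, rfl⟩
  obtain ⟨hxm, hxmax⟩ := msetMax_spec.mp hx
  obtain ⟨q, hq, hq1⟩ := Multiset.mem_map.mp hxm
  have hqe : q = (x, i) := Prod.ext hq1 (mem_endAt.mp hq).2
  refine ⟨(x, i), ?_, by rw [← hqe]; exact (mem_endAt.mp hq).1, rfl, ?_⟩
  · unfold shortEnd
    rw [hx]
    rfl
  · intro r hr
    exact hxmax _ (Multiset.mem_map_of_mem Prod.fst hr)

theorem L_key {m : Multiset Seg} (hm : IsMS m) {b c : ℤ} (hbc : b ≤ c)
    (hc : msetMax (m.map Prod.snd) = some c) (hno : downSeqNbr m b c = none)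
    {Δt : Seg} (hN : extO m b (c-b).toNat = some Δt) :
    ∀ q ∈ endAt m c, q.1 ≤ Δt.1 := by
  intro q hq
  by_contra hgt
  push_neg at hgt
  have hN' : (((c-b).toNat : ℕ) : ℤ) = c - b := Int.toNat_of_nonneg (by omega)
  have hchain : ChainDn m ((c-b).toNat+1) c q.1 := by
    have := L_chain hm b (c-b).toNat hN q.1 hgt
    rw [show b + (((c-b).toNat : ℕ) : ℤ) = c from by omega] at this
    exact this
  obtain ⟨Δ0, hse, hΔ0m, hΔ02, hΔ0max⟩ := shortEnd_spec (endAt_max_ne hc)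
  have hchain' : ChainDn m ((c-b).toNat+1) Δ0.2 Δ0.1 := by
    rw [hΔ02]
    exact chainDn_mono hchain (hΔ0max q hq)
  have hnn := downNbrAux_ne_none hm ((c-b).toNat+1) Δ0 hΔ0m hchain'
  unfold downSeqNbr at hno
  rw [hse] at hno
  rw [show (c - (b-1)).toNat = (c-b).toNat + 1 from by omega] at hno
  exact hnn hno

theorem L_qgen {m : Multiset Seg} (hm : IsMS m) {q : Seg} {i : ℤ} (hq : q ∈ endAt m i) :
    q.1 ≤ q.2 := hm q (mem_endAt.mp hq).1

theorem L_bound {m : Multiset Seg} (hm : IsMS m) (b : ℤ) (j : ℕ) :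
    ∀ q ∈ endAt m (b+(j:ℤ)), q.1 < (PP m b (j+1)).1 → q.1 ≤ (PP m b j).1 := by
  intro q hq hlt
  have hqg := L_qgen hm hq
  have hq2 := (mem_endAt.mp hq).2
  rcases h1 : extO m b (j+1) with _ | Δ'
  · rcases h0 : extO m b j with _ | p
    · have : (PP m b j).1 = b + (j:ℤ) := by
        unfold PP; rw [h0]; show b-1+(j:ℤ)+1 = _; ring
      omega
    · have he : extNext m p = none := by
        have := extO_succ m b j
        rw [h0, h1] at this
        exact this.symm
      obtain ⟨hpm, hp2, _⟩ := extO_spec hm h0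
      have hnp := extNext_none_spec he q (by rw [show p.2+1 = b+(j:ℤ) from by omega]; exact hq) 
      have : ¬ (p.1 < q.1) := fun hl => hnp ((prec_consec (by omega) (by omega)).mpr hl)
      have : (PP m b j).1 = p.1 := by unfold PP; rw [h0]; rfl
      omega
  · obtain ⟨p, h0, he, hplt⟩ := extO_chain h1
    obtain ⟨hpm, hp2, _⟩ := extO_spec hm h0
    have hmin := (extNext_some_spec he).2.2.2
    have e1 : (PP m b (j+1)).1 = Δ'.1 := by unfold PP; rw [h1]; rfl
    have e0 : (PP m b j).1 = p.1 := by unfold PP; rw [h0]; rfl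
    by_contra hgt
    push_neg at hgt
    have hpq : Prec p q := (prec_consec (by omega) (by omega)).mpr (by omega)
    have := hmin q (by rw [show p.2+1 = b+(j:ℤ) from by omega]; exact hq) hpq
    omega

theorem L_BN {m : Multiset Seg} (hm : IsMS m) {b c : ℤ} (hbc : b ≤ c)
    (hc : msetMax (m.map Prod.snd) = some c) (hno : downSeqNbr m b c = none) :
    ∀ q ∈ endAt m c, q.1 ≤ (PP m b (c-b).toNat).1 := by
  intro q hq
  rcases h : extO m b (c-b).toNat with _ | Δt
  · have : (PP m b (c-b).toNat).1 = c := by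
      unfold PP; rw [h]; show b-1+(((c-b).toNat:ℕ):ℤ)+1 = _
      have : (((c-b).toNat : ℕ) : ℤ) = c - b := Int.toNat_of_nonneg (by omega)
      omega
    have := L_qgen hm hq
    have := (mem_endAt.mp hq).2
    omega
  · have : (PP m b (c-b).toNat).1 = Δt.1 := by unfold PP; rw [h]; rfl
    rw [this]
    exact L_key hm hbc hc hno h q hq

theorem L_shortEnd {m : Multiset Seg} (hm : IsMS m) {b c : ℤ} (hbc : b ≤ c)
    (hc : msetMax (m.map Prod.snd) = some c) (hno : downSeqNbr m b c = none) :
    shortEnd (mprime m b c) c = some (PP m b (c-b).toNat) := by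
  have hN' : (((c-b).toNat : ℕ) : ℤ) = c - b := Int.toNat_of_nonneg (by omega)
  have hS := L_SN1 hm hbc
  have hmax : msetMax ((endAt (mprime m b c) c).map Prod.fst) = some ((PP m b (c-b).toNat).1) := by
    refine msetMax_spec.mpr ⟨?_, ?_⟩
    · exact Multiset.mem_map_of_mem _ (by rw [hS]; exact Multiset.mem_add.mpr (Or.inr (Multiset.mem_singleton_self _)))
    · intro y hy
      obtain ⟨q, hq, hq1⟩ := Multiset.mem_map.mp hy
      rw [hS] at hq
      rcases Multiset.mem_add.mp hq with h | h
      · rw [← hq1]; exact L_BN hm hbc hc hno q h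
      · rw [Multiset.mem_singleton.mp h] at hq1; omega
  unfold shortEnd
  rw [hmax]
  have : ((PP m b (c-b).toNat).1, c) = PP m b (c-b).toNat :=
    Prod.ext rfl (by rw [PP_snd hm]; omega)
  rw [Option.map_some, this]

theorem L_mwNext {m : Multiset Seg} (hm : IsMS m) {b c : ℤ} (j : ℕ)
    (hj : j+1 ≤ (c-b).toNat) :
    mwNext (mprime m b c) (PP m b (j+1)) = some (PP m b j) := by
  have hp2 : (PP m b (j+1)).2 = b + (j:ℤ) + 1 := by rw [PP_snd hm]; push_cast; ring
  have hlvl : (PP m b (j+1)).2 - 1 = b - 1 + (j:ℤ) + 1 := by omega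
  have hSj : endAt (mprime m b c) (b-1+(j:ℤ)+1) ≤ endAt m (b-1+(j:ℤ)+1) + {PP m b j} ∧
      PP m b j ∈ endAt (mprime m b c) (b-1+(j:ℤ)+1) := by
    rcases h1 : extO m b (j+1) with _ | Δ'
    · rw [L_Smid_none hm b c hj h1]
      exact ⟨le_refl _, Multiset.mem_add.mpr (Or.inr (Multiset.mem_singleton_self _))⟩
    · rw [L_Smid_some hm b c hj h1]
      constructor
      · exact add_le_add (Multiset.erase_le Δ' _) le_rfl
      · exact Multiset.mem_add.mpr (Or.inr (Multiset.mem_singleton_self _))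
  have hmax : msetMax (((endAt (mprime m b c) ((PP m b (j+1)).2 - 1)).filter
      fun Δ => Prec Δ (PP m b (j+1))).map Prod.fst) = some ((PP m b j).1) := by
    refine msetMax_spec.mpr ⟨?_, ?_⟩
    · refine Multiset.mem_map_of_mem _ (Multiset.mem_filter.mpr ⟨?_, ?_⟩)
      · rw [hlvl]; exact hSj.2
      · refine (prec_consec ?_ (PP_fst_le_snd hm b (j+1))).mpr (PP_fst_lt hm b j)
        rw [PP_snd hm, hp2]; push_cast; ring
    · intro y hy
      obtain ⟨q, hq, hq1⟩ := Multiset.mem_map.mp hy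
      have hqf := Multiset.mem_filter.mp hq
      have hq2 : q.2 = (PP m b (j+1)).2 - 1 := (mem_endAt.mp hqf.1).2
      have hqS : q ∈ endAt m (b-1+(j:ℤ)+1) + {PP m b j} := by
        apply Multiset.mem_of_le hSj.1
        rw [← hlvl]; exact hqf.1
      have hqlt : q.1 < (PP m b (j+1)).1 := by
        have hqg : q.1 ≤ q.2 := by
          rcases Multiset.mem_add.mp hqS with h | h
          · exact L_qgen hm h
          · rw [Multiset.mem_singleton.mp h]; exact PP_fst_le_snd hm b j
        exact (prec_consec hq2 (PP_fst_le_snd hm b (j+1))).mp hqf.2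
      rcases Multiset.mem_add.mp hqS with h | h
      · rw [← hq1]
        refine L_bound hm b j q ?_ hqlt
        rw [show b + (j:ℤ) = b-1+(j:ℤ)+1 from by ring]
        exact h
      · rw [Multiset.mem_singleton.mp h] at hq1; omega
  unfold mwNext
  rw [hmax, Option.map_some]
  congr 1
  refine Prod.ext rfl ?_
  show (PP m b (j+1)).2 - 1 = (PP m b j).2
  rw [PP_snd hm, PP_snd hm]; push_cast; ring

theorem L_mw0 {m : Multiset Seg} (hm : IsMS m) (b c : ℤ) :
    mwNext (mprime m b c) (PP m b 0) = none := by
  have hp2 : (PP m b 0).2 = b := by rw [PP_snd hm]; push_cast; ring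
  have hfil : (endAt (mprime m b c) ((PP m b 0).2 - 1)).filter
      (fun Δ => Prec Δ (PP m b 0)) = 0 := by
    rw [hp2]
    rcases h0 : extO m b 0 with _ | Δ
    · rw [L_S0_none hm b c h0]
      rw [extO_zero] at h0
      rw [longEnd_none_spec h0]
      rfl
    · rw [L_S0_some hm b c h0]
      rw [extO_zero] at h0
      obtain ⟨_, hΔ2, hmin⟩ := longEnd_some_spec h0
      refine Multiset.filter_eq_nil.mpr ?_
      intro q hq hpr
      have hqm : q ∈ endAt m (b-1) := Multiset.mem_of_mem_erase hq
      have hmn := hmin q hqm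
      have hq2 : q.2 = b - 1 := (mem_endAt.mp hqm).2
      have hg : q.1 ≤ q.2 := L_qgen hm hqm
      have : q.1 < (PP m b 0).1 := (prec_consec (by omega) (PP_fst_le_snd hm b 0)).mp hpr
      have : (PP m b 0).1 = Δ.1 := by unfold PP; rw [extO_zero, h0]; rfl
      omega
  unfold mwNext
  rw [hfil]
  rfl

theorem L_wfl0 {m : Multiset Seg} (hm : IsMS m) (b c : ℤ) : WFL (b-1) (extListO m b c) := by
  have hw0 := L_wfl hm b 0 ((c-b).toNat + 1)
  simp only [Nat.zero_add, Nat.cast_zero, add_zero] at hw0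
  exact hw0

theorem L_ends_le {m : Multiset Seg} (hm : IsMS m) {b c : ℤ} (hbc : b ≤ c)
    (hc : msetMax (m.map Prod.snd) = some c) :
    ∀ Δ ∈ mprime m b c, Δ.2 ≤ c := by
  refine ends_le_applyExt _ _ _ _ (L_wfl0 hm b c) ?_ (ends_le_of_msetMax hc)
  unfold extListO
  have : (((c-b).toNat : ℕ) : ℤ) = c - b := Int.toNat_of_nonneg (by omega)
  simp only [List.length_map, List.length_range]
  push_cast
  omega

theorem L_PPmem {m : Multiset Seg} (hm : IsMS m) {b c : ℤ} (hbc : b ≤ c) {j : ℕ}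
    (hj : j ≤ (c-b).toNat) : PP m b j ∈ mprime m b c ∧ (PP m b j).2 = b + (j:ℤ) := by
  refine ⟨?_, PP_snd hm b j⟩
  rcases Nat.lt_or_ge j (c-b).toNat with hlt | hge
  · have hj1 : j + 1 ≤ (c-b).toNat := hlt
    have hmem : PP m b j ∈ endAt (mprime m b c) (b-1+(j:ℤ)+1) := by
      rcases h1 : extO m b (j+1) with _ | Δ'
      · rw [L_Smid_none hm b c hj1 h1]
        exact Multiset.mem_add.mpr (Or.inr (Multiset.mem_singleton_self _))
      · rw [L_Smid_some hm b c hj1 h1]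
        exact Multiset.mem_add.mpr (Or.inr (Multiset.mem_singleton_self _))
    exact (mem_endAt.mp hmem).1
  · rw [show j = (c-b).toNat from by omega]
    have hmem : PP m b (c-b).toNat ∈ endAt (mprime m b c) c := by
      rw [L_SN1 hm hbc]
      exact Multiset.mem_add.mpr (Or.inr (Multiset.mem_singleton_self _))
    exact (mem_endAt.mp hmem).1

theorem L_maxend {m : Multiset Seg} (hm : IsMS m) {b c : ℤ} (hbc : b ≤ c)
    (hc : msetMax (m.map Prod.snd) = some c) :
    msetMax ((mprime m b c).map Prod.snd) = some c := by
  refine msetMax_spec.mpr ⟨?_, ?_⟩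
  · obtain ⟨hmem, hsnd⟩ := L_PPmem hm hbc (le_refl (c-b).toNat)
    have : (((c-b).toNat : ℕ) : ℤ) = c - b := Int.toNat_of_nonneg (by omega)
    have hc' : (PP m b (c-b).toNat).2 = c := by omega
    exact Multiset.mem_map.mpr ⟨PP m b (c-b).toNat, hmem, hc'⟩
  · intro y hy
    obtain ⟨q, hq, hq1⟩ := Multiset.mem_map.mp hy
    rw [← hq1]
    exact L_ends_le hm hbc hc q hq

theorem L_card {m : Multiset Seg} (hm : IsMS m) {b c : ℤ} (hbc : b ≤ c) :
    (c-b).toNat ≤ Multiset.card (mprime m b c) := by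
  have hN' : (((c-b).toNat : ℕ) : ℤ) = c - b := Int.toNat_of_nonneg (by omega)
  have hval : (Finset.Icc b c).val ≤ (mprime m b c).map Prod.snd := by
    rw [Multiset.le_iff_count]
    intro a
    by_cases ha : a ∈ Finset.Icc b c
    · have h1 : Multiset.count a (Finset.Icc b c).val ≤ 1 :=
        Multiset.nodup_iff_count_le_one.mp (Finset.Icc b c).nodup a
      have hab : b ≤ a ∧ a ≤ c := Finset.mem_Icc.mp ha
      have hjle : (a - b).toNat ≤ (c-b).toNat := by omega
      obtain ⟨hmem, hsnd⟩ := L_PPmem hm hbc hjle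
      have hsa : (PP m b (a-b).toNat).2 = a := by
        rw [hsnd]
        have : (((a-b).toNat : ℕ) : ℤ) = a - b := Int.toNat_of_nonneg (by omega)
        omega
      have : a ∈ (mprime m b c).map Prod.snd := by
        rw [← hsa]; exact Multiset.mem_map_of_mem _ hmem
      have h2 : 1 ≤ Multiset.count a ((mprime m b c).map Prod.snd) :=
        Multiset.one_le_count_iff_mem.mpr this
      omega
    · have : Multiset.count a (Finset.Icc b c).val = 0 :=
        Multiset.count_eq_zero_of_notMem ha
      omega
  have hcard := Multiset.card_le_card hval
  rw [Multiset.card_map] at hcard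
  have : (Finset.Icc b c).val.card = (Finset.Icc b c).card := rfl
  rw [this, Int.card_Icc] at hcard
  omega

theorem L_unroll {m : Multiset Seg} (hm : IsMS m) {b c : ℤ} (hbc : b ≤ c) :
    ∀ (j : ℕ), j ≤ (c-b).toNat → ∀ fuel, j ≤ fuel →
      mwAux (mprime m b c) fuel (PP m b j) = ((List.range j).reverse).map (PP m b) := by
  intro j
  induction j with
  | zero =>
    intro _ fuel _
    cases fuel with
    | zero => rfl
    | succ f =>
      show (match mwNext (mprime m b c) (PP m b 0) with
        | none => []
        | some Δ => Δ :: mwAux (mprime m b c) f Δ) = _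
      rw [L_mw0 hm b c]
      rfl
  | succ j ih =>
    intro hj fuel hfuel
    cases fuel with
    | zero => omega
    | succ f =>
      show (match mwNext (mprime m b c) (PP m b (j+1)) with
        | none => []
        | some Δ => Δ :: mwAux (mprime m b c) f Δ) = _
      rw [L_mwNext hm j hj]
      rw [List.range_succ, List.reverse_append, List.map_append]
      show PP m b j :: mwAux (mprime m b c) f (PP m b j) = _
      rw [ih (by omega) f (by omega)]
      rfl


/-- if no downward sequence of minimal linked segments in
neighbors on `m` ranging from `c` to `b-1` exists, then the ordered segments
participating in the MW algorithm for `ℐ^Zel_{[b,c]}(m)` are exactly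
`Δ̃_{c-1}⁺, …, Δ̃_{b-1}⁺`, where `Δ̃_{b-1}, …, Δ̃_{c-1}` are the (possibly void)
segments participating in the extension process, chosen directly from `m`. -/
theorem stmt16 (m : Multiset Seg) (hm : IsMS m) (hne : m ≠ 0)
    (c : ℤ) (hc : msetMax (m.map Prod.snd) = some c)
    (b : ℤ) (hbc : b ≤ c) (hno : downSeqNbr m b c = none) :
    mwList (IZel b c m) = (plusList (b - 1) (extList m b c)).reverse := by
  have hIZ : IZel b c m = mprime m b c := by
    unfold IZel mprime
    rw [izRem_eq_self hne hno, extList_eq']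
  rw [hIZ]
  have hML : mwList (mprime m b c) = PP m b (c-b).toNat ::
      mwAux (mprime m b c) (Multiset.card (mprime m b c)) (PP m b (c-b).toNat) := by
    unfold mwList
    rw [L_maxend hm hbc hc]
    show (match shortEnd (mprime m b c) c with
      | none => []
      | some Δ0 => Δ0 :: mwAux (mprime m b c) (Multiset.card (mprime m b c)) Δ0) = _
    rw [L_shortEnd hm hbc hc hno]
  rw [hML, L_unroll hm hbc (c-b).toNat (le_refl _) _ (L_card hm hbc)]
  rw [extList_eq']
  unfold extListO
  rw [plusList_map_range]
  have hfun : (fun (t:ℕ) => plusAt (b - 1 + (t:ℤ)) (extO m b t)) = PP m b := rfl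
  rw [hfun, List.range_succ, List.map_append, List.reverse_append]
  show _ = [PP m b (c-b).toNat] ++ (List.map (PP m b) (List.range (c-b).toNat)).reverse
  rw [← List.map_reverse]
  rfl

end Multiseg
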